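/- Let T be an interval translation map on [0,1) such that every discontinuity point β of T has the property that both one-sided orbits of β are eventually periodic (T is eventually periodic). Then T is of finite type: there exists n with Tⁿ⁺¹([0,1)) = Tⁿ([0,1)). -/

import Mathlib

/-- An interval translation map on `r` intervals: a map `T : [0,1) -> [0,1)`
with partition points `0 = beta 0 < ... < beta r = 1` such that on each
partition interval `[beta i, beta (i+1))` the map `T` is the translation by `gamma i`. -/
structure ITM (r : Nat) where
  T : ℝ → ℝ
  β : Fin (r + 1) → ℝ
  γ : Fin r → ℝ
  beta_mono : StrictMono β
  beta_zero : β 0 = 0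
  beta_last : β (Fin.last r) = 1
  branch : ∀ i : Fin r, ∀ x ∈ Set.Ico (β i.castSucc) (β i.succ), T x = x + γ i
  maps_to : Set.MapsTo T (Set.Ico 0 1) (Set.Ico 0 1)

namespace ITMaux

variable {r : ℕ} (M : ITM r)

/-- Points on forward orbits of partition points (right germs). -/
def RightPt (a : ℝ) : Prop :=
  ∃ i : Fin (r + 1), i ≠ Fin.last r ∧ ∃ k : ℕ, M.T^[k] (M.β i) = a

/-- `b` is the left limit of `T^[k]` at `β i`. -/
def Germ (i : Fin (r + 1)) (k : ℕ) (b : ℝ) : Prop :=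
  ∃ δ : ℝ, 0 < δ ∧ ∀ y ∈ Set.Ioo (M.β i - δ) (M.β i), M.T^[k] y = y + (b - M.β i)

def LeftPt (b : ℝ) : Prop :=
  ∃ i : Fin (r + 1), i ≠ 0 ∧ ∃ k : ℕ, Germ M i k b

def Good (S : Set ℝ) : Prop :=
  ∃ F : Finset (ℝ × ℝ), (∀ p ∈ F, RightPt M p.1 ∧ LeftPt M p.2) ∧
    S = ⋃ p ∈ F, Set.Ico p.1 p.2

lemma beta_nonneg (i : Fin (r + 1)) : 0 ≤ M.β i := by
  have := M.beta_mono.monotone (Fin.zero_le i)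
  rwa [M.beta_zero] at this

lemma beta_le_one (i : Fin (r + 1)) : M.β i ≤ 1 := by
  have := M.beta_mono.monotone (Fin.le_last i)
  rwa [M.beta_last] at this

lemma beta_lt_one {i : Fin (r + 1)} (h : i ≠ Fin.last r) : M.β i < 1 := by
  have := M.beta_mono (lt_of_le_of_ne (Fin.le_last i) h)
  rwa [M.beta_last] at this

lemma beta_pos {i : Fin (r + 1)} (h : i ≠ 0) : 0 < M.β i := by
  have := M.beta_mono (Fin.pos_iff_ne_zero.mpr h : (0 : Fin (r+1)) < i)
  rwa [M.beta_zero] at this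

lemma rightPt_mem {a : ℝ} (ha : RightPt M a) : a ∈ Set.Ico (0 : ℝ) 1 := by
  obtain ⟨i, hi, k, rfl⟩ := ha
  exact (M.maps_to.iterate k) ⟨beta_nonneg M i, beta_lt_one M hi⟩

lemma leftPt_le_one {b : ℝ} (hb : LeftPt M b) : b ≤ 1 := by
  obtain ⟨i, hi, k, δ, hδ, h⟩ := hb
  by_contra hb1
  push_neg at hb1
  have hβpos : 0 < M.β i := beta_pos M hi
  have hβ1 : M.β i ≤ 1 := beta_le_one M i
  set η := min δ (min (M.β i) (b - 1)) with hη
  have hηδ : η ≤ δ := min_le_left _ _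
  have hηβ : η ≤ M.β i := le_trans (min_le_right _ _) (min_le_left _ _)
  have hηb : η ≤ b - 1 := le_trans (min_le_right _ _) (min_le_right _ _)
  have hηpos : 0 < η := lt_min hδ (lt_min hβpos (by linarith))
  set y := M.β i - η / 2 with hy
  have hyI : y ∈ Set.Ioo (M.β i - δ) (M.β i) := by
    constructor <;> simp only [hy] <;> linarith
  have hy01 : y ∈ Set.Ico (0 : ℝ) 1 := by
    constructor <;> simp only [hy] <;> linarith
  have hT := (M.maps_to.iterate k) hy01
  rw [h y hyI] at hT
  have h2 := hT.2
  simp only [hy] at h2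
  linarith

lemma germ_unique {i : Fin (r + 1)} {k : ℕ} {b b' : ℝ}
    (h : Germ M i k b) (h' : Germ M i k b') : b = b' := by
  obtain ⟨δ, hδ, hg⟩ := h
  obtain ⟨δ', hδ', hg'⟩ := h'
  have hmin : 0 < min δ δ' := lt_min hδ hδ'
  have hminδ : min δ δ' ≤ δ := min_le_left _ _
  have hminδ' : min δ δ' ≤ δ' := min_le_right _ _
  have h1 := hg (M.β i - min δ δ' / 2) ⟨by linarith, by linarith⟩
  have h2 := hg' (M.β i - min δ δ' / 2) ⟨by linarith, by linarith⟩
  rw [h1] at h2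
  linarith

lemma rightPt_beta {i : Fin (r + 1)} (h : i ≠ Fin.last r) : RightPt M (M.β i) :=
  ⟨i, h, 0, rfl⟩

lemma leftPt_beta {i : Fin (r + 1)} (h : i ≠ 0) : LeftPt M (M.β i) :=
  ⟨i, h, 0, 1, one_pos, fun y _ => by simp⟩

lemma exists_branch (x : ℝ) (hx : x ∈ Set.Ico (0 : ℝ) 1) :
    ∃ i : Fin r, M.β i.castSucc ≤ x ∧ x < M.β i.succ := by
  classical
  have h0 : M.β 0 ≤ x := by rw [M.beta_zero]; exact hx.1
  set s : Finset (Fin (r + 1)) := Finset.univ.filter (fun j => M.β j ≤ x) with hs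
  have hne : s.Nonempty := ⟨0, by simp [hs, h0]⟩
  set j := s.max' hne with hj
  have hjx : M.β j ≤ x := by
    have hmem : j ∈ s := s.max'_mem hne
    rw [hs, Finset.mem_filter] at hmem
    exact hmem.2
  have hjr : (j : ℕ) < r := by
    by_contra h
    have hj' : j = Fin.last r := by
      apply Fin.ext
      have := j.isLt
      simp only [Fin.val_last]
      omega
    rw [hj', M.beta_last] at hjx
    exact absurd hjx (not_le.mpr hx.2)
  refine ⟨⟨(j : ℕ), hjr⟩, ?_, ?_⟩
  · have he : (⟨(j : ℕ), hjr⟩ : Fin r).castSucc = j := by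
      apply Fin.ext; simp
    rw [he]; exact hjx
  · by_contra h
    push_neg at h
    have hmem : (⟨(j : ℕ), hjr⟩ : Fin r).succ ∈ s := by
      rw [hs, Finset.mem_filter]; exact ⟨Finset.mem_univ _, h⟩
    have hle := s.le_max' _ hmem
    rw [← hj] at hle
    have hv := Fin.le_def.mp hle
    simp [Fin.val_succ] at hv

lemma leftPt_step {b : ℝ} (hb : LeftPt M b) (i : Fin r) {μ : ℝ} (hμ : 0 < μ)
    (hsub : Set.Ioo (b - μ) b ⊆ Set.Ico (M.β i.castSucc) (M.β i.succ)) :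
    LeftPt M (b + M.γ i) := by
  obtain ⟨s, hs0, k, δ, hδ, hgerm⟩ := hb
  refine ⟨s, hs0, k + 1, min δ μ, lt_min hδ hμ, ?_⟩
  intro y hy
  have hminδ : min δ μ ≤ δ := min_le_left _ _
  have hminμ : min δ μ ≤ μ := min_le_right _ _
  have hy' : y ∈ Set.Ioo (M.β s - δ) (M.β s) := ⟨by linarith [hy.1], hy.2⟩
  have h1 : M.T^[k] y = y + (b - M.β s) := hgerm y hy'
  have h2 : M.T^[k] y ∈ Set.Ioo (b - μ) b := by
    rw [h1]
    constructor
    · linarith [hy.1]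
    · linarith [hy.2]
  have h3 := M.branch i _ (hsub h2)
  rw [Function.iterate_succ_apply', h3, h1]
  ring

lemma orbit_finite (x : ℝ) (m p : ℕ) (hp : 1 ≤ p) (hper : M.T^[m + p] x = M.T^[m] x) :
    (Set.range fun k : ℕ => M.T^[k] x).Finite := by
  have key : ∀ k : ℕ, ∃ k' < m + p, M.T^[k'] x = M.T^[k] x := by
    intro k
    induction k using Nat.strong_induction_on with
    | _ k ih =>
      rcases lt_or_ge k (m + p) with hk | hk
      · exact ⟨k, hk, rfl⟩
      · have e1 : M.T^[k] x = M.T^[k - p] x := by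
          have e2 : k - m - p + (m + p) = k := by omega
          calc M.T^[k] x = M.T^[k - m - p] (M.T^[m + p] x) := by
                rw [← Function.iterate_add_apply, e2]
            _ = M.T^[k - m - p] (M.T^[m] x) := by rw [hper]
            _ = M.T^[k - p] x := by
                rw [← Function.iterate_add_apply]; congr 1; omega
        obtain ⟨k', hk', he⟩ := ih (k - p) (by omega)
        exact ⟨k', hk', by rw [he, ← e1]⟩
  apply Set.Finite.subset ((Set.finite_Iio (m + p)).image (fun k => M.T^[k] x))
  rintro _ ⟨k, rfl⟩
  obtain ⟨k', hk', he⟩ := key k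
  exact ⟨k', hk', he⟩

lemma rightPt_finite
    (hplus : ∀ i : Fin (r + 1), i ≠ Fin.last r →
      ∃ m p : ℕ, 1 ≤ p ∧ M.T^[m + p] (M.β i) = M.T^[m] (M.β i)) :
    {a | RightPt M a}.Finite := by
  have hsub : {a | RightPt M a} ⊆
      ⋃ i : Fin (r + 1), ⋃ (_ : i ≠ Fin.last r), Set.range fun k : ℕ => M.T^[k] (M.β i) := by
    rintro a ⟨i, hi, k, rfl⟩
    exact Set.mem_iUnion.mpr ⟨i, Set.mem_iUnion.mpr ⟨hi, ⟨k, rfl⟩⟩⟩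
  refine Set.Finite.subset (Set.finite_iUnion fun i => ?_) hsub
  by_cases h : i = Fin.last r
  · refine Set.Finite.subset Set.finite_empty ?_
    intro x hx
    obtain ⟨hne', -⟩ := Set.mem_iUnion.mp hx
    exact absurd h hne'
  · obtain ⟨m, p, hp, hper⟩ := hplus i h
    refine Set.Finite.subset (orbit_finite M _ m p hp hper) ?_
    intro x hx
    obtain ⟨-, hx'⟩ := Set.mem_iUnion.mp hx
    exact hx'

lemma leftPt_finite
    (hminus : ∀ i : Fin (r + 1), i ≠ 0 →
      ∃ m p : ℕ, 1 ≤ p ∧ ∃ ε > 0, ∀ y ∈ Set.Ioo (M.β i - ε) (M.β i),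
        M.T^[m + p] y = M.T^[m] y) :
    {b | LeftPt M b}.Finite := by
  have main : ∀ i : Fin (r + 1), {b : ℝ | i ≠ 0 ∧ ∃ k, Germ M i k b}.Finite := by
    intro i
    by_cases hi : i = 0
    · refine Set.Finite.subset Set.finite_empty ?_
      rintro b ⟨h, -⟩
      exact absurd hi h
    · obtain ⟨m, p, hp, ε, hε, hper⟩ := hminus i hi
      have red : ∀ k : ℕ, ∀ b : ℝ, Germ M i k b → ∃ k' < m + p, Germ M i k' b := by
        intro k
        induction k using Nat.strong_induction_on with
        | _ k ih =>
          intro b hg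
          rcases lt_or_ge k (m + p) with hk | hk
          · exact ⟨k, hk, hg⟩
          · obtain ⟨δ, hδ, h⟩ := hg
            have hg' : Germ M i (k - p) b := by
              refine ⟨min δ ε, lt_min hδ hε, ?_⟩
              intro y hy
              have hminδ : min δ ε ≤ δ := min_le_left _ _
              have hminε : min δ ε ≤ ε := min_le_right _ _
              have hy1 : y ∈ Set.Ioo (M.β i - δ) (M.β i) := ⟨by linarith [hy.1], hy.2⟩
              have hy2 : y ∈ Set.Ioo (M.β i - ε) (M.β i) := ⟨by linarith [hy.1], hy.2⟩
              have e1 : M.T^[k] y = M.T^[k - p] y := by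
                have e2 : k - m - p + (m + p) = k := by omega
                calc M.T^[k] y = M.T^[k - m - p] (M.T^[m + p] y) := by
                      rw [← Function.iterate_add_apply, e2]
                  _ = M.T^[k - m - p] (M.T^[m] y) := by rw [hper y hy2]
                  _ = M.T^[k - p] y := by
                      rw [← Function.iterate_add_apply]; congr 1; omega
              rw [← e1]
              exact h y hy1
            obtain ⟨k', hk', hgk'⟩ := ih (k - p) (by omega) b hg'
            exact ⟨k', hk', hgk'⟩
      have hsub : {b : ℝ | i ≠ 0 ∧ ∃ k, Germ M i k b} ⊆
          ⋃ k ∈ Set.Iio (m + p), {b : ℝ | Germ M i k b} := by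
        rintro b ⟨-, k, hk⟩
        obtain ⟨k', hk', hg⟩ := red k b hk
        exact Set.mem_biUnion hk' hg
      refine Set.Finite.subset (Set.Finite.biUnion (Set.finite_Iio _) fun k _ => ?_) hsub
      apply Set.Subsingleton.finite
      intro b hb b' hb'
      exact germ_unique M hb hb'
  have hsub : {b | LeftPt M b} ⊆ ⋃ i : Fin (r + 1), {b : ℝ | i ≠ 0 ∧ ∃ k, Germ M i k b} := by
    rintro b ⟨i, hi, k, hk⟩
    exact Set.mem_iUnion.mpr ⟨i, hi, k, hk⟩
  exact Set.Finite.subset (Set.finite_iUnion main) hsub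

lemma good_empty : Good M ∅ := ⟨∅, by simp, by simp⟩

lemma good_union {S S' : Set ℝ} (h : Good M S) (h' : Good M S') : Good M (S ∪ S') := by
  obtain ⟨F, hF, rfl⟩ := h
  obtain ⟨F', hF', rfl⟩ := h'
  refine ⟨F ∪ F', ?_, ?_⟩
  · intro q hq
    rcases Finset.mem_union.mp hq with h | h
    exacts [hF q h, hF' q h]
  · rw [Finset.set_biUnion_union]

/-- Image of a one-branch interval. -/
lemma good_image_Ico_branch (a b : ℝ) (i : Fin r) (ha : RightPt M a)
    (hia : M.β i.castSucc ≤ a) (hab : a < b) (hb1 : b ≤ M.β i.succ) (hb : LeftPt M b) :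
    Good M (M.T '' Set.Ico a b) := by
  have hbr : ∀ x ∈ Set.Ico a b, M.T x = x + M.γ i := fun x hx =>
    M.branch i x ⟨le_trans hia hx.1, lt_of_lt_of_le hx.2 hb1⟩
  have himg : M.T '' Set.Ico a b = Set.Ico (a + M.γ i) (b + M.γ i) := by
    rw [Set.image_congr hbr, Set.image_add_const_Ico]
  rw [himg]
  refine ⟨{(a + M.γ i, b + M.γ i)}, ?_, by simp⟩
  intro q hq
  rw [Finset.mem_singleton] at hq
  subst hq
  constructor
  · obtain ⟨s, hs, k, hk⟩ := ha
    refine ⟨s, hs, k + 1, ?_⟩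
    rw [Function.iterate_succ_apply', hk]
    exact M.branch i a ⟨hia, lt_of_lt_of_le hab hb1⟩
  · refine leftPt_step M hb i (μ := b - a) (by linarith) ?_
    intro x hx
    obtain ⟨hx1, hx2⟩ := hx
    constructor
    · have : a < x := by linarith
      linarith
    · exact lt_of_lt_of_le hx2 hb1

lemma good_image_Ico : ∀ n : ℕ, ∀ a b : ℝ,
    (Finset.univ.filter fun j : Fin (r + 1) => a < M.β j).card ≤ n →
    RightPt M a → LeftPt M b → Good M (M.T '' Set.Ico a b) := by
  classical
  intro n
  induction n with
  | zero =>
    intro a b hcard ha _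
    exfalso
    have ha1 : a < 1 := (rightPt_mem M ha).2
    have hmem : Fin.last r ∈ Finset.univ.filter fun j : Fin (r + 1) => a < M.β j := by
      rw [Finset.mem_filter]
      exact ⟨Finset.mem_univ _, by rw [M.beta_last]; exact ha1⟩
    have := Finset.card_pos.mpr ⟨_, hmem⟩
    omega
  | succ n ih =>
    intro a b hcard ha hb
    rcases le_or_gt b a with hba | hab
    · refine ⟨∅, by simp, ?_⟩
      simp [Set.Ico_eq_empty (not_lt.mpr hba)]
    · have haI : a ∈ Set.Ico (0 : ℝ) 1 := rightPt_mem M ha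
      obtain ⟨i, hi1, hi2⟩ := exists_branch M a haI
      rcases le_or_gt b (M.β i.succ) with hb1 | hb1
      · exact good_image_Ico_branch M a b i ha hi1 hab hb1 hb
      · set c := M.β i.succ with hc
        have hac : a < c := hi2
        have hcb : c < b := hb1
        have hsplit : Set.Ico a b = Set.Ico a c ∪ Set.Ico c b :=
          (Set.Ico_union_Ico_eq_Ico (le_of_lt hac) (le_of_lt hcb)).symm
        have hgood1 : Good M (M.T '' Set.Ico a c) :=
          good_image_Ico_branch M a c i ha hi1 hac le_rfl
            (leftPt_beta M (Fin.succ_ne_zero i))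
        have hb_le1 : b ≤ 1 := leftPt_le_one M hb
        have hclast : i.succ ≠ Fin.last r := by
          intro h
          rw [hc, h, M.beta_last] at hcb
          linarith
        have hrc : RightPt M c := rightPt_beta M hclast
        have hcard' : (Finset.univ.filter fun j : Fin (r + 1) => c < M.β j).card ≤ n := by
          have hsubf : (Finset.univ.filter fun j : Fin (r + 1) => c < M.β j) ⊆
              Finset.univ.filter fun j : Fin (r + 1) => a < M.β j := by
            intro j hj
            rw [Finset.mem_filter] at hj ⊢
            exact ⟨hj.1, lt_trans hac hj.2⟩
          have hss : (Finset.univ.filter fun j : Fin (r + 1) => c < M.β j) ⊂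
              Finset.univ.filter fun j : Fin (r + 1) => a < M.β j := by
            refine (Finset.ssubset_iff_of_subset hsubf).mpr ⟨i.succ, ?_, ?_⟩
            · rw [Finset.mem_filter]; exact ⟨Finset.mem_univ _, hac⟩
            · rw [Finset.mem_filter]
              push_neg
              intro _
              exact le_rfl
          have := Finset.card_lt_card hss
          omega
        have hgood2 : Good M (M.T '' Set.Ico c b) := ih c b hcard' hrc hb
        rw [hsplit, Set.image_union]
        exact good_union M hgood1 hgood2

lemma good_biUnion (F : Finset (ℝ × ℝ)) (f : ℝ × ℝ → Set ℝ)
    (h : ∀ p ∈ F, Good M (f p)) : Good M (⋃ p ∈ F, f p) := by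
  classical
  induction F using Finset.induction_on with
  | empty => simpa using good_empty M
  | insert _ _ hnm ih =>
    rw [Finset.set_biUnion_insert]
    exact good_union M (h _ (Finset.mem_insert_self _ _))
      (ih fun p hp => h p (Finset.mem_insert_of_mem hp))

lemma good_image {S : Set ℝ} (h : Good M S) : Good M (M.T '' S) := by
  obtain ⟨F, hF, rfl⟩ := h
  rw [Set.image_iUnion₂]
  exact good_biUnion M F _ fun p hp =>
    good_image_Ico M _ p.1 p.2 le_rfl (hF p hp).1 (hF p hp).2

lemma good_iterate (n : ℕ) : Good M (M.T^[n] '' Set.Ico (0 : ℝ) 1) := by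
  induction n with
  | zero =>
    have h0last : (0 : Fin (r + 1)) ≠ Fin.last r := by
      intro h
      have : (0 : ℝ) = 1 := by rw [← M.beta_zero, h, M.beta_last]
      linarith
    have hlast0 : (Fin.last r) ≠ (0 : Fin (r + 1)) := fun h => h0last h.symm
    refine ⟨{((0 : ℝ), (1 : ℝ))}, ?_, by simp⟩
    intro q hq
    rw [Finset.mem_singleton] at hq
    subst hq
    constructor
    · exact ⟨0, h0last, 0, by simp [M.beta_zero]⟩
    · exact ⟨Fin.last r, hlast0, 0, 1, one_pos, fun y _ => by simp [M.beta_last]⟩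
  | succ n ih =>
    rw [Function.iterate_succ', Set.image_comp]
    exact good_image M ih

end ITMaux

/-- If both one-sided orbits of every partition point are eventually periodic
(the map is eventually periodic), then the interval translation map is of finite
type. Right germs at a point coincide with the orbit of the point itself; left
germs are expressed via a left neighbourhood. -/
theorem itm_eventually_periodic_finite_type (r : ℕ) (M : ITM r)
    (hplus : ∀ i : Fin (r + 1), i ≠ Fin.last r →
      ∃ m p : ℕ, 1 ≤ p ∧ M.T^[m + p] (M.β i) = M.T^[m] (M.β i))
    (hminus : ∀ i : Fin (r + 1), i ≠ 0 →
      ∃ m p : ℕ, 1 ≤ p ∧ ∃ ε > 0, ∀ y ∈ Set.Ioo (M.β i - ε) (M.β i),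
        M.T^[m + p] y = M.T^[m] y) :
    ∃ n : ℕ, M.T^[n + 1] '' Set.Ico (0:ℝ) 1 = M.T^[n] '' Set.Ico (0:ℝ) 1 := by
  classical
  have hRfin := ITMaux.rightPt_finite M hplus
  have hLfin := ITMaux.leftPt_finite M hminus
  have hgood : ∀ n, ITMaux.Good M (M.T^[n] '' Set.Ico (0 : ℝ) 1) := ITMaux.good_iterate M
  choose F hF1 hF2 using hgood
  set C : Set (Finset (ℝ × ℝ)) :=
    {G : Finset (ℝ × ℝ) | ↑G ⊆ ({a | ITMaux.RightPt M a} ×ˢ {b | ITMaux.LeftPt M b} : Set (ℝ × ℝ))}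
    with hC
  have hmem : ∀ n, F n ∈ C := by
    intro n p hp
    exact Set.mem_prod.mpr ⟨(hF1 n p hp).1, (hF1 n p hp).2⟩
  have hCfin : C.Finite := by
    have : C = ((↑) : Finset (ℝ × ℝ) → Set (ℝ × ℝ)) ⁻¹' {t : Set (ℝ × ℝ) | t ⊆ {a | ITMaux.RightPt M a} ×ˢ {b | ITMaux.LeftPt M b}} := rfl
    rw [this]
    exact Set.Finite.preimage (Finset.coe_injective.injOn)
      ((hRfin.prod hLfin).finite_subsets)
  haveI : Finite ↥C := hCfin.to_subtype
  obtain ⟨n₁, n₂, hne, heq⟩ :=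
    Finite.exists_ne_map_eq_of_infinite (fun n : ℕ => (⟨F n, hmem n⟩ : ↥C))
  have hFeq : F n₁ = F n₂ := congrArg Subtype.val heq
  have hXeq : M.T^[n₁] '' Set.Ico (0 : ℝ) 1 = M.T^[n₂] '' Set.Ico (0 : ℝ) 1 := by
    rw [hF2 n₁, hF2 n₂, hFeq]
  have hmono : ∀ n : ℕ,
      M.T^[n + 1] '' Set.Ico (0 : ℝ) 1 ⊆ M.T^[n] '' Set.Ico (0 : ℝ) 1 := by
    intro n
    have hcomp : M.T^[n + 1] = M.T^[n] ∘ M.T := Function.iterate_succ _ _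
    rw [hcomp, Set.image_comp]
    exact Set.image_mono (M.maps_to.image_subset)
  have hanti : Antitone (fun n : ℕ => M.T^[n] '' Set.Ico (0 : ℝ) 1) :=
    antitone_nat_of_succ_le hmono
  have key : ∀ a b : ℕ, a < b →
      M.T^[a] '' Set.Ico (0 : ℝ) 1 = M.T^[b] '' Set.Ico (0 : ℝ) 1 →
      ∃ n : ℕ, M.T^[n + 1] '' Set.Ico (0:ℝ) 1 = M.T^[n] '' Set.Ico (0:ℝ) 1 := by
    intro a b hab he
    refine ⟨a, Set.Subset.antisymm (hmono a) ?_⟩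
    calc M.T^[a] '' Set.Ico (0 : ℝ) 1 = M.T^[b] '' Set.Ico (0 : ℝ) 1 := he
      _ ⊆ M.T^[a + 1] '' Set.Ico (0 : ℝ) 1 := hanti (Nat.succ_le_of_lt hab)
  rcases hne.lt_or_gt with h | h
  · exact key n₁ n₂ h hXeq
  · exact key n₂ n₁ h hXeq.symm
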